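/- With the graph notation below, assume S admits an orthonormal eigenbasis with eigenvalues 1 = λ₁ > λ₂ ≥ ⋯ ≥ λ_N > −1, and let λ = max(|λ₂|, |λ_N|) satisfy 0 < λ < 1. Define δ = Σ_{i=1}^{N} π_i ((I − S²)†)_{ii} and, for an integer ℓ ≥ 1, define δ̄ = Σ_{i=1}^{N} π_i Σ_{j=0}^{ℓ−1} ( (P^{2j})_{ii} − π_i ). Then for every ε > 0 and every integer ℓ ≥ log(2/(ε(1−λ)))/(2 log(1/λ)), one has |δ − δ̄| ≤ ε/2. -/

import Mathlib

open Matrix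

/-- `P` is the Moore–Penrose pseudoinverse of `M`. -/
def IsMoorePenrose {n : Type*} [Fintype n] [DecidableEq n]
    (M P : Matrix n n ℝ) : Prop :=
  M * P * M = M ∧ P * M * P = P ∧ (M * P)ᵀ = M * P ∧ (P * M)ᵀ = P * M

set_option maxHeartbeats 1000000

section Aux
variable {n : Type*} [Fintype n] [DecidableEq n]

lemma mp_unique (M P1 P2 : Matrix n n ℝ)
    (h1 : IsMoorePenrose M P1) (h2 : IsMoorePenrose M P2) : P1 = P2 := by
  obtain ⟨a1, b1, c1, d1⟩ := h1
  obtain ⟨a2, b2, c2, d2⟩ := h2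
  have hA : M * P1 = M * P2 := by
    calc M * P1 = (M * P1)ᵀ := c1.symm
    _ = P1ᵀ * Mᵀ := by rw [Matrix.transpose_mul]
    _ = P1ᵀ * (M * P2 * M)ᵀ := by rw [a2]
    _ = P1ᵀ * (Mᵀ * (M * P2)ᵀ) := by rw [Matrix.transpose_mul]
    _ = (P1ᵀ * Mᵀ) * (M * P2) := by rw [c2]; noncomm_ring
    _ = (M * P1)ᵀ * (M * P2) := by rw [Matrix.transpose_mul]
    _ = (M * P1 * M) * P2 := by rw [c1]; noncomm_ring
    _ = M * P2 := by rw [a1]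
  have hB : P1 * M = P2 * M := by
    calc P1 * M = (P1 * M)ᵀ := d1.symm
    _ = Mᵀ * P1ᵀ := by rw [Matrix.transpose_mul]
    _ = (M * P2 * M)ᵀ * P1ᵀ := by rw [a2]
    _ = ((P2 * M)ᵀ * Mᵀ) * P1ᵀ := by rw [mul_assoc M P2 M, Matrix.transpose_mul]
    _ = (P2 * M) * (Mᵀ * P1ᵀ) := by rw [d2]; noncomm_ring
    _ = (P2 * M) * (P1 * M)ᵀ := by rw [Matrix.transpose_mul]
    _ = P2 * (M * P1 * M) := by rw [d1]; noncomm_ring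
    _ = P2 * M := by rw [a1]
  calc P1 = P1 * M * P1 := b1.symm
  _ = P1 * (M * P2) := by rw [mul_assoc, hA]
  _ = (P1 * M) * P2 := by rw [mul_assoc]
  _ = (P2 * M) * P2 := by rw [hB]
  _ = P2 := b2

lemma sandwich_mul (U : Matrix n n ℝ) (hU : U * Uᵀ = 1) (f g : n → ℝ) :
    (Uᵀ * diagonal f * U) * (Uᵀ * diagonal g * U)
      = Uᵀ * diagonal (fun k => f k * g k) * U := by
  have : diagonal f * (U * Uᵀ) * diagonal g = diagonal fun k => f k * g k := by
    rw [hU, mul_one, diagonal_mul_diagonal]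
  calc (Uᵀ * diagonal f * U) * (Uᵀ * diagonal g * U)
      = Uᵀ * (diagonal f * (U * Uᵀ) * diagonal g) * U := by noncomm_ring
  _ = _ := by rw [this]

lemma sandwich_transpose (U : Matrix n n ℝ) (f : n → ℝ) :
    (Uᵀ * diagonal f * U)ᵀ = Uᵀ * diagonal f * U := by
  rw [Matrix.transpose_mul, Matrix.transpose_mul]
  simp [mul_assoc]

lemma sandwich_pow (U : Matrix n n ℝ) (hU : U * Uᵀ = 1) (f : n → ℝ) (m : ℕ) :
    (Uᵀ * diagonal f * U) ^ m = Uᵀ * diagonal (fun k => f k ^ m) * U := by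
  induction m with
  | zero =>
      simp only [pow_zero]
      rw [Matrix.diagonal_one, mul_one, mul_eq_one_comm.mp hU]
  | succ m ih =>
      rw [pow_succ, ih, sandwich_mul U hU,
        show (fun k => f k ^ m * f k) = (fun k => f k ^ (m+1)) from
          funext fun k => (pow_succ _ _).symm]

lemma sandwich_diag (U : Matrix n n ℝ) (f : n → ℝ) (i : n) :
    (Uᵀ * diagonal f * U) i i = ∑ k, f k * (U k i) ^ 2 := by
  rw [mul_assoc, Matrix.mul_apply]
  refine Finset.sum_congr rfl fun k _ => ?_
  rw [Matrix.mul_apply]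
  simp only [Matrix.transpose_apply, Matrix.diagonal_apply, ite_mul, zero_mul,
    Finset.sum_ite_eq, Finset.mem_univ, if_true]
  ring


lemma sandwich_one (U : Matrix n n ℝ) (hU : Uᵀ * U = 1) :
    Uᵀ * diagonal (fun _ : n => (1:ℝ)) * U = 1 := by
  rw [Matrix.diagonal_one, mul_one, hU]

lemma sandwich_sub (U : Matrix n n ℝ) (f g : n → ℝ) :
    Uᵀ * diagonal f * U - Uᵀ * diagonal g * U
      = Uᵀ * diagonal (fun k => f k - g k) * U := by
  rw [← Matrix.diagonal_sub]
  noncomm_ring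


lemma sandwich_congr (U : Matrix n n ℝ) (f g : n → ℝ) (h : ∀ k, f k = g k) :
    Uᵀ * diagonal f * U = Uᵀ * diagonal g * U := by
  rw [show f = g from funext h]

end Aux
/-- with the same graph setup as Statement 2, the truncated
disagreement `δ̄ = Σ_i π_i Σ_{j=0}^{ℓ−1} ((P^{2j})_{ii} − π_i)` approximates the
true disagreement `δ = Σ_i π_i ((I−S²)†)_{ii}` within `ε/2` whenever
`ℓ ≥ log(2/(ε(1−λ)))/(2 log(1/λ))`. -/
theorem stmt3 (N : ℕ) (hN : 2 ≤ N)
    (A : Matrix (Fin N) (Fin N) ℝ) (hA : Aᵀ = A) (hAnn : ∀ i j, 0 ≤ A i j)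
    (d : Fin N → ℝ) (hd : ∀ i, d i = ∑ j, A i j) (hdpos : ∀ i, 0 < d i)
    (dsum : ℝ) (hdsum : dsum = ∑ i, d i)
    (P : Matrix (Fin N) (Fin N) ℝ)
    (hP : P = Matrix.diagonal (fun i => (d i)⁻¹) * A)
    (S : Matrix (Fin N) (Fin N) ℝ)
    (hSdef : S = Matrix.diagonal (fun i => (Real.sqrt (d i))⁻¹) * A *
        Matrix.diagonal (fun i => (Real.sqrt (d i))⁻¹))
    (pv : Fin N → ℝ) (hpv : ∀ i, pv i = d i / dsum)
    (ψ : Fin N → (Fin N → ℝ)) (lam : Fin N → ℝ)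
    (heig : ∀ k, S.mulVec (ψ k) = lam k • ψ k)
    (horth : ∀ k l, ψ k ⬝ᵥ ψ l = if k = l then 1 else 0)
    (hlam0 : lam ⟨0, by omega⟩ = 1)
    (hanti : ∀ k l : Fin N, k ≤ l → lam l ≤ lam k)
    (hgap : ∀ k : Fin N, k ≠ ⟨0, by omega⟩ → lam k < 1)
    (hlow : ∀ k : Fin N, -1 < lam k)
    (lamStar : ℝ)
    (hlamStar : lamStar = max |lam ⟨1, by omega⟩| |lam ⟨N - 1, by omega⟩|)
    (hlamStar0 : 0 < lamStar) (hlamStar1 : lamStar < 1)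
    (Q : Matrix (Fin N) (Fin N) ℝ)
    (hQ : IsMoorePenrose (1 - S ^ 2) Q)
    (δ : ℝ) (hδ : δ = ∑ i, pv i * Q i i)
    (ε : ℝ) (hε : 0 < ε) (ℓ : ℕ) (hℓ1 : 1 ≤ ℓ)
    (hℓ : Real.log (2 / (ε * (1 - lamStar))) / (2 * Real.log (1 / lamStar)) ≤ ℓ)
    (δbar : ℝ)
    (hδbar : δbar = ∑ i, pv i * ∑ j ∈ Finset.range ℓ, ((P ^ (2 * j)) i i - pv i)) :
    |δ - δbar| ≤ ε / 2 := by
  have hNe : Nonempty (Fin N) := ⟨⟨0, by omega⟩⟩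
  have hdsum0 : 0 < dsum := by
    rw [hdsum]; exact Finset.sum_pos (fun i _ => hdpos i) Finset.univ_nonempty
  set k0 : Fin N := ⟨0, by omega⟩ with hk0
  set U : Matrix (Fin N) (Fin N) ℝ := Matrix.of (fun k i => ψ k i) with hUdef
  have hUUt : U * Uᵀ = 1 := by
    ext k l
    have := horth k l
    simpa [Matrix.mul_apply, dotProduct, Matrix.one_apply, hUdef] using this
  have hUtU : Uᵀ * U = 1 := mul_eq_one_comm.mp hUUt
  have hSU : S * Uᵀ = Uᵀ * Matrix.diagonal lam := by
    ext i k
    have h := congrFun (heig k) i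
    simp only [Matrix.mulVec, dotProduct, Pi.smul_apply, smul_eq_mul] at h
    rw [Matrix.mul_apply, Matrix.mul_diagonal]
    simp only [Matrix.transpose_apply, hUdef, Matrix.of_apply]
    rw [h]; ring
  have hS : S = Uᵀ * Matrix.diagonal lam * U := by
    calc S = S * Uᵀ * U := by rw [mul_assoc, hUtU, mul_one]
    _ = _ := by rw [hSU]
  -- the set of "nonzero" eigen-directions
  have hfk : ∀ k : Fin N, k ≠ k0 → 0 < 1 - lam k ^ 2 := by
    intro k hk
    have h1 : lam k < 1 := hgap k hk
    have h2 : -1 < lam k := hlow k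
    nlinarith
  have hfk0 : 1 - lam k0 ^ 2 = 0 := by rw [hlam0]; norm_num
  set g : Fin N → ℝ := fun k => if k = k0 then 0 else (1 - lam k ^ 2)⁻¹ with hg
  have hM : 1 - S ^ 2 = Uᵀ * Matrix.diagonal (fun k => 1 - lam k ^ 2) * U := by
    rw [hS, sandwich_pow U hUUt, ← sandwich_one U hUtU, sandwich_sub]
  have hQ' : IsMoorePenrose (1 - S ^ 2) (Uᵀ * Matrix.diagonal g * U) := by
    rw [hM]
    refine ⟨?_, ?_, ?_, ?_⟩
    · rw [sandwich_mul U hUUt, sandwich_mul U hUUt]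
      refine sandwich_congr U _ _ fun k => ?_
      by_cases hk : k = k0
      · subst hk; simp [hg, hfk0]
      · have h0 : 1 - lam k ^ 2 ≠ 0 := (hfk k hk).ne'
        simp only [hg, if_neg hk]
        field_simp
    · rw [sandwich_mul U hUUt, sandwich_mul U hUUt]
      refine sandwich_congr U _ _ fun k => ?_
      by_cases hk : k = k0
      · subst hk; simp [hg, hfk0]
      · have h0 : 1 - lam k ^ 2 ≠ 0 := (hfk k hk).ne'
        simp only [hg, if_neg hk]
        field_simp
    · rw [sandwich_mul U hUUt, sandwich_transpose]
    · rw [sandwich_mul U hUUt, sandwich_transpose]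
  have hQQ' : Q = Uᵀ * Matrix.diagonal g * U := mp_unique _ _ _ hQ hQ'
  have hδ2 : δ = ∑ i, pv i * ∑ k, g k * ψ k i ^ 2 := by
    rw [hδ]
    refine Finset.sum_congr rfl fun i _ => ?_
    rw [hQQ', sandwich_diag]
    simp [hUdef]
  -- the Perron eigenvector
  have hsne : ∀ i, Real.sqrt (d i) ≠ 0 := fun i => (Real.sqrt_pos.mpr (hdpos i)).ne'
  set v : Fin N → ℝ := fun i => Real.sqrt (d i) with hv
  have hvpos : ∀ i, 0 < v i := fun i => Real.sqrt_pos.mpr (hdpos i)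
  have hSv : S.mulVec v = v := by
    funext i
    rw [hSdef]
    simp only [Matrix.mulVec, dotProduct, Matrix.mul_diagonal, Matrix.diagonal_mul]
    calc ∑ j, (Real.sqrt (d i))⁻¹ * A i j * (Real.sqrt (d j))⁻¹ * v j
        = ∑ j, (Real.sqrt (d i))⁻¹ * A i j := by
          refine Finset.sum_congr rfl fun j _ => ?_
          simp only [hv]
          rw [mul_assoc, inv_mul_cancel₀ (hsne j), mul_one]
    _ = (Real.sqrt (d i))⁻¹ * d i := by rw [← Finset.mul_sum, ← hd i]
    _ = v i := by
          simp only [hv]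
          have hms := Real.mul_self_sqrt (hdpos i).le
          field_simp
          rw [div_eq_iff (hsne i), hms]
  set c : Fin N → ℝ := U.mulVec v with hc
  have hceq : ∀ k, lam k * c k = c k := by
    intro k
    have hUSU : U * S = Matrix.diagonal lam * U := by
      rw [hS, ← mul_assoc, ← mul_assoc, hUUt, one_mul]
    have h1 : (Matrix.diagonal lam).mulVec c = c := by
      rw [hc, Matrix.mulVec_mulVec, ← hUSU, ← Matrix.mulVec_mulVec, hSv]
    have := congrFun h1 k
    rwa [Matrix.mulVec_diagonal] at this
  have hck : ∀ k, k ≠ k0 → c k = 0 := by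
    intro k hk
    have h2 : (lam k - 1) * c k = 0 := by rw [sub_mul, one_mul, hceq k, sub_self]
    exact (mul_eq_zero.mp h2).resolve_left (sub_ne_zero.mpr (ne_of_lt (hgap k hk)))
  have hvU : ∀ i, v i = c k0 * ψ k0 i := by
    have hv2 : Uᵀ.mulVec c = v := by
      rw [hc, Matrix.mulVec_mulVec, hUtU, Matrix.one_mulVec]
    intro i
    have h3 := congrFun hv2 i
    rw [← h3]
    simp only [Matrix.mulVec, dotProduct, Matrix.transpose_apply]
    rw [Finset.sum_eq_single k0]
    · exact mul_comm _ _
    · intro b _ hb; rw [hck b hb, mul_zero]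
    · simp
  have hnorm : ∑ i, ψ k0 i ^ 2 = 1 := by
    have := horth k0 k0
    simpa [dotProduct, sq] using this
  have hc2 : c k0 ^ 2 = dsum := by
    have h4 : dsum = ∑ i, (c k0 * ψ k0 i) ^ 2 := by
      rw [hdsum]
      refine Finset.sum_congr rfl fun i _ => ?_
      rw [← hvU i, hv]
      exact (Real.sq_sqrt (hdpos i).le).symm
    rw [h4]
    have : ∀ i : Fin N, (c k0 * ψ k0 i) ^ 2 = c k0 ^ 2 * ψ k0 i ^ 2 := fun i => by ring
    rw [Finset.sum_congr rfl fun i _ => this i, ← Finset.mul_sum, hnorm, mul_one]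
  have hpsi : ∀ i, pv i = ψ k0 i ^ 2 := by
    intro i
    have h1 : d i = dsum * ψ k0 i ^ 2 := by
      rw [← hc2]
      have : d i = v i ^ 2 := (Real.sq_sqrt (hdpos i).le).symm
      rw [this, hvU i]; ring
    rw [hpv, h1, mul_div_cancel_left₀ _ hdsum0.ne']
  -- P powers have same diagonal as S powers
  set E : Matrix (Fin N) (Fin N) ℝ := Matrix.diagonal (fun i => (Real.sqrt (d i))⁻¹) with hE
  set F : Matrix (Fin N) (Fin N) ℝ := Matrix.diagonal (fun i => Real.sqrt (d i)) with hF
  have hEF : E * F = 1 := by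
    have hss : (fun i => (Real.sqrt (d i))⁻¹ * Real.sqrt (d i)) = fun _ : Fin N => (1:ℝ) :=
      funext fun i => inv_mul_cancel₀ (hsne i)
    rw [hE, hF, Matrix.diagonal_mul_diagonal, hss, Matrix.diagonal_one]
  have hFE : F * E = 1 := by
    have hss : (fun i => Real.sqrt (d i) * (Real.sqrt (d i))⁻¹) = fun _ : Fin N => (1:ℝ) :=
      funext fun i => mul_inv_cancel₀ (hsne i)
    rw [hE, hF, Matrix.diagonal_mul_diagonal, hss, Matrix.diagonal_one]
  have hPES : P = E * S * F := by
    rw [hP, hSdef]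
    calc Matrix.diagonal (fun i => (d i)⁻¹) * A
        = (E * E) * A * (E * F) := by
          have hdd : (fun i => (Real.sqrt (d i))⁻¹ * (Real.sqrt (d i))⁻¹)
              = fun i => (d i)⁻¹ := by
            funext i; rw [← mul_inv, Real.mul_self_sqrt (hdpos i).le]
          rw [hEF, mul_one, hE, Matrix.diagonal_mul_diagonal, hdd]
    _ = E * (E * A * E) * F := by noncomm_ring
  have hPn : ∀ m, P ^ m = E * S ^ m * F := by
    intro m
    induction m with
    | zero => rw [pow_zero, pow_zero, mul_one, hEF]
    | succ m ih =>
        rw [pow_succ, ih, hPES]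
        calc E * S ^ m * F * (E * S * F) = E * S ^ m * (F * E) * S * F := by noncomm_ring
        _ = E * S ^ (m + 1) * F := by rw [hFE, mul_one, pow_succ, mul_assoc E _ S]
  have hPdiag : ∀ m (i : Fin N), (P ^ m) i i = (S ^ m) i i := by
    intro m i
    rw [hPn m]
    simp only [hE, hF, Matrix.mul_diagonal, Matrix.diagonal_mul]
    rw [mul_comm ((Real.sqrt (d i))⁻¹) _, mul_assoc, inv_mul_cancel₀ (hsne i), mul_one]
  have hSdiag : ∀ m (i : Fin N), (S ^ m) i i = ∑ k, lam k ^ m * ψ k i ^ 2 := by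
    intro m i
    rw [hS, sandwich_pow U hUUt, sandwich_diag]
    simp [hUdef]
  -- rewrite δbar
  have hinner : ∀ (i : Fin N) (j : ℕ), (P ^ (2 * j)) i i - pv i
      = ∑ k, (if k = k0 then 0 else (lam k ^ 2) ^ j) * ψ k i ^ 2 := by
    intro i j
    rw [hPdiag, hSdiag, hpsi i]
    have hterm : ∀ k : Fin N, (if k = k0 then 0 else (lam k ^ 2) ^ j) * ψ k i ^ 2
        = lam k ^ (2 * j) * ψ k i ^ 2 - (if k = k0 then lam k ^ (2 * j) * ψ k i ^ 2 else 0) := by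
      intro k
      split_ifs with h
      · simp
      · rw [pow_mul]; ring
    rw [Finset.sum_congr rfl fun k _ => hterm k, Finset.sum_sub_distrib,
      Finset.sum_ite_eq' Finset.univ k0]
    simp [hlam0]
  have hδbar2 : δbar = ∑ i, pv i *
      ∑ k, (if k = k0 then 0 else ∑ j ∈ Finset.range ℓ, (lam k ^ 2) ^ j) * ψ k i ^ 2 := by
    rw [hδbar]
    refine Finset.sum_congr rfl fun i _ => ?_
    congr 1
    rw [Finset.sum_congr rfl fun j _ => hinner i j, Finset.sum_comm]
    refine Finset.sum_congr rfl fun k _ => ?_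
    rw [← Finset.sum_mul]
    congr 1
    split_ifs with h
    · simp
    · rfl
  set r : Fin N → ℝ := fun k => if k = k0 then 0 else (lam k ^ 2) ^ ℓ / (1 - lam k ^ 2) with hrdef
  have hr : ∀ k, g k - (if k = k0 then 0 else ∑ j ∈ Finset.range ℓ, (lam k ^ 2) ^ j) = r k := by
    intro k
    by_cases h : k = k0
    · simp [hg, hrdef, h]
    · simp only [hg, hrdef, if_neg h]
      have h1 := hfk k h
      have hx1 : lam k ^ 2 ≠ 1 := by intro hcon; rw [hcon] at h1; norm_num at h1
      rw [geom_sum_eq hx1]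
      have h0 : 1 - lam k ^ 2 ≠ 0 := h1.ne'
      have h0' : lam k ^ 2 - 1 ≠ 0 := by intro hcon; apply h0; linarith
      field_simp
      ring
  have hdiff : δ - δbar = ∑ i, pv i * ∑ k, r k * ψ k i ^ 2 := by
    rw [hδ2, hδbar2, ← Finset.sum_sub_distrib]
    refine Finset.sum_congr rfl fun i _ => ?_
    rw [← mul_sub, ← Finset.sum_sub_distrib]
    congr 1
    refine Finset.sum_congr rfl fun k _ => ?_
    rw [← sub_mul, hr k]
  -- bounds
  set B : ℝ := lamStar ^ (2 * ℓ) / (1 - lamStar) with hB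
  have hl1 : (0:ℝ) < 1 - lamStar := by linarith
  have hBnn : 0 ≤ B := by positivity
  have hrB : ∀ k, 0 ≤ r k ∧ r k ≤ B := by
    intro k
    by_cases h : k = k0
    · simp [hrdef, h, hBnn]
    · have h1 := hfk k h
      have hk1 : (⟨1, by omega⟩ : Fin N) ≤ k := by
        rw [Fin.le_def]
        show 1 ≤ k.val
        have : k.val ≠ 0 := fun hc => h (Fin.ext hc)
        omega
      have hkN : k ≤ (⟨N - 1, by omega⟩ : Fin N) := by
        rw [Fin.le_def]
        show k.val ≤ N - 1
        have := k.isLt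
        omega
      have habs : |lam k| ≤ lamStar := by
        rw [hlamStar, abs_le]
        constructor
        · have lo : lam ⟨N - 1, by omega⟩ ≤ lam k := hanti _ _ hkN
          have := neg_abs_le (lam ⟨N - 1, by omega⟩)
          have := le_max_right |lam ⟨1, by omega⟩| |lam ⟨N - 1, by omega⟩|
          linarith
        · have up : lam k ≤ lam ⟨1, by omega⟩ := hanti _ _ hk1
          have := le_abs_self (lam ⟨1, by omega⟩)
          have := le_max_left |lam ⟨1, by omega⟩| |lam ⟨N - 1, by omega⟩|
          linarith
      have hsq : lam k ^ 2 ≤ lamStar ^ 2 := by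
        rw [← sq_abs]
        exact pow_le_pow_left₀ (abs_nonneg _) habs 2
      have hnum : (lam k ^ 2) ^ ℓ ≤ lamStar ^ (2 * ℓ) := by
        rw [pow_mul]
        exact pow_le_pow_left₀ (sq_nonneg _) hsq ℓ
      have hden : 1 - lamStar ≤ 1 - lam k ^ 2 := by nlinarith
      constructor
      · simp only [hrdef, if_neg h]
        exact div_nonneg (pow_nonneg (sq_nonneg _) _) h1.le
      · simp only [hrdef, if_neg h, hB]
        exact div_le_div₀ (by positivity) hnum hl1 hden
  have hsum1 : ∀ i : Fin N, ∑ k, ψ k i ^ 2 = 1 := by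
    intro i
    have h5 : (Uᵀ * U) i i = 1 := by rw [hUtU]; simp
    rw [Matrix.mul_apply] at h5
    simpa [sq, Matrix.transpose_apply, hUdef] using h5
  have hpvnn : ∀ i, 0 ≤ pv i := fun i => by
    rw [hpv]; exact div_nonneg (hdpos i).le hdsum0.le
  have hpvsum : ∑ i, pv i = 1 := by
    simp only [hpv]
    rw [← Finset.sum_div, ← hdsum, div_self hdsum0.ne']
  have hinnerB : ∀ i : Fin N, 0 ≤ ∑ k, r k * ψ k i ^ 2 ∧ ∑ k, r k * ψ k i ^ 2 ≤ B := by
    intro i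
    constructor
    · exact Finset.sum_nonneg fun k _ => mul_nonneg (hrB k).1 (sq_nonneg _)
    · calc ∑ k, r k * ψ k i ^ 2 ≤ ∑ k, B * ψ k i ^ 2 :=
        Finset.sum_le_sum fun k _ => mul_le_mul_of_nonneg_right (hrB k).2 (sq_nonneg _)
      _ = B := by rw [← Finset.mul_sum, hsum1 i, mul_one]
  have hdiffnn : 0 ≤ δ - δbar := by
    rw [hdiff]
    exact Finset.sum_nonneg fun i _ => mul_nonneg (hpvnn i) (hinnerB i).1
  have hdiffB : δ - δbar ≤ B := by
    rw [hdiff]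
    calc ∑ i, pv i * ∑ k, r k * ψ k i ^ 2 ≤ ∑ i, pv i * B :=
      Finset.sum_le_sum fun i _ => mul_le_mul_of_nonneg_left (hinnerB i).2 (hpvnn i)
    _ = B := by rw [← Finset.sum_mul, hpvsum, one_mul]
  -- numerical bound B ≤ ε/2
  have hBe : B ≤ ε / 2 := by
    have hneg : Real.log lamStar < 0 := Real.log_neg hlamStar0 hlamStar1
    have hlog : 0 < Real.log (1 / lamStar) := by
      rw [one_div, Real.log_inv]; linarith
    have hkey : Real.log (2 / (ε * (1 - lamStar))) ≤ ℓ * (2 * Real.log (1 / lamStar)) :=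
      (div_le_iff₀ (by linarith)).mp hℓ
    have hpow : lamStar ^ (2 * ℓ) ≤ ε * (1 - lamStar) / 2 := by
      have hrhs_pos : 0 < ε * (1 - lamStar) / 2 := by positivity
      rw [← Real.log_le_log_iff (by positivity) hrhs_pos, Real.log_pow]
      have hlogeq : Real.log (2 / (ε * (1 - lamStar))) = -Real.log (ε * (1 - lamStar) / 2) := by
        rw [← Real.log_inv, inv_div]
      have h2 : Real.log (1 / lamStar) = -Real.log lamStar := by rw [one_div, Real.log_inv]
      rw [hlogeq, h2] at hkey
      push_cast
      linarith
    have hstep : lamStar ^ (2 * ℓ) / (1 - lamStar) ≤ (ε * (1 - lamStar) / 2) / (1 - lamStar) :=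
      (div_le_div_iff_of_pos_right hl1).mpr hpow
    have heq : (ε * (1 - lamStar) / 2) / (1 - lamStar) = ε / 2 := by
      field_simp
    rw [hB]
    linarith
  rw [abs_of_nonneg hdiffnn]
  linarith
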